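/- Let S be the unit ball in R^n, ε ∈ (0,1), and let N = {x ∈ S : √n x_i / ε ∈ Z for all i} be the ε-grid net. Then for any n×n real matrix A, ‖A‖₂ ≤ (1-ε)^{-2} sup_{x,y ∈ N} |x^T A y|. -/

import Mathlib

open Matrix
open scoped RealInnerProductSpace

namespace Stmt7Aux

variable {n : ℕ}

noncomputable def E (v : Fin n → ℝ) : EuclideanSpace ℝ (Fin n) :=
  (WithLp.equiv 2 (Fin n → ℝ)).symm v

lemma norm_E (v : Fin n → ℝ) : ‖E v‖ = Real.sqrt (∑ i, v i ^ 2) := by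
  rw [EuclideanSpace.norm_eq]
  congr 1
  refine Finset.sum_congr rfl fun i _ => ?_
  rw [Real.norm_eq_abs, sq_abs]
  rfl

lemma inner_E (x y : Fin n → ℝ) : (inner ℝ (E x) (E y) : ℝ) = x ⬝ᵥ y := by
  rw [PiLp.inner_apply]
  simp [E, dotProduct, mul_comm]

lemma clm_E (A : Matrix (Fin n) (Fin n) ℝ) (y : Fin n → ℝ) :
    Matrix.toEuclideanCLM (𝕜 := ℝ) A (E y) = E (A.mulVec y) :=
  Matrix.toEuclideanCLM_toLp A y

/-- Upper bound on bilinear form via operator norm. -/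
lemma abs_dot_le (A : Matrix (Fin n) (Fin n) ℝ) (x y : Fin n → ℝ) :
    |x ⬝ᵥ A.mulVec y| ≤ ‖Matrix.toEuclideanCLM (𝕜 := ℝ) A‖ *
      Real.sqrt (∑ i, x i ^ 2) * Real.sqrt (∑ i, y i ^ 2) := by
  have h1 : x ⬝ᵥ A.mulVec y = (inner ℝ (E x) (Matrix.toEuclideanCLM (𝕜 := ℝ) A (E y)) : ℝ) := by
    rw [clm_E, inner_E]
  rw [h1]
  calc |(inner ℝ (E x) (Matrix.toEuclideanCLM (𝕜 := ℝ) A (E y)) : ℝ)|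
      ≤ ‖E x‖ * ‖Matrix.toEuclideanCLM (𝕜 := ℝ) A (E y)‖ := abs_real_inner_le_norm _ _
    _ ≤ ‖E x‖ * (‖Matrix.toEuclideanCLM (𝕜 := ℝ) A‖ * ‖E y‖) := by
        exact mul_le_mul_of_nonneg_left ((Matrix.toEuclideanCLM (𝕜 := ℝ) A).le_opNorm _)
          (norm_nonneg _)
    _ = ‖Matrix.toEuclideanCLM (𝕜 := ℝ) A‖ * Real.sqrt (∑ i, x i ^ 2)
          * Real.sqrt (∑ i, y i ^ 2) := by rw [norm_E, norm_E]; ring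

/-- Converse: operator norm bounded by sup of bilinear form over the unit ball. -/
lemma opNorm_le_of_dot (A : Matrix (Fin n) (Fin n) ℝ) (B : ℝ) (hB : 0 ≤ B)
    (h : ∀ x y : Fin n → ℝ, (∑ i, x i ^ 2) ≤ 1 → (∑ i, y i ^ 2) ≤ 1 →
      |x ⬝ᵥ A.mulVec y| ≤ B) :
    ‖Matrix.toEuclideanCLM (𝕜 := ℝ) A‖ ≤ B := by
  refine ContinuousLinearMap.opNorm_le_bound _ hB fun z => ?_
  set y : Fin n → ℝ := WithLp.equiv 2 (Fin n → ℝ) z with hy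
  have hEz : E y = z := by simp [E, hy]
  rw [← hEz, clm_E]
  rcases eq_or_lt_of_le (norm_nonneg (E y)) with hc | hc
  · -- ‖E y‖ = 0 so y = 0
    have : E y = 0 := by rwa [eq_comm, norm_eq_zero] at hc
    have hy0 : y = 0 := by
      simpa [E] using congrArg (WithLp.equiv 2 (Fin n → ℝ)) this
    have hz : E (A.mulVec y) = 0 := by
      rw [hy0, Matrix.mulVec_zero]; rfl
    rw [hz, norm_zero]
    positivity
  · set c := ‖E y‖ with hcdef
    have hsum : (∑ i, y i ^ 2) = c ^ 2 := by
      have := norm_E y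
      rw [← hcdef] at this
      rw [this, Real.sq_sqrt (Finset.sum_nonneg fun i _ => sq_nonneg _)]
    set y' : Fin n → ℝ := c⁻¹ • y with hy'
    have hy'sum : (∑ i, y' i ^ 2) ≤ 1 := by
      have : (∑ i, y' i ^ 2) = c⁻¹ ^ 2 * ∑ i, y i ^ 2 := by
        rw [Finset.mul_sum]
        refine Finset.sum_congr rfl fun i _ => ?_
        simp [hy', mul_pow]
      rw [this, hsum, inv_pow]
      rw [inv_mul_cancel₀ (pow_ne_zero _ (ne_of_gt hc))]
    have hyc : y = c • y' := by
      rw [hy', smul_smul, mul_inv_cancel₀ (ne_of_gt hc), one_smul]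
    set w := A.mulVec y' with hw
    set d := Real.sqrt (∑ i, w i ^ 2) with hd
    have hd0 : 0 ≤ d := Real.sqrt_nonneg _
    have hdB : d ≤ B := by
      rcases eq_or_lt_of_le hd0 with hd' | hd'
      · linarith
      · -- take x = d⁻¹ • w
        have hwsum : (∑ i, w i ^ 2) = d ^ 2 := by
          rw [hd, Real.sq_sqrt (Finset.sum_nonneg fun i _ => sq_nonneg _)]
        set x : Fin n → ℝ := d⁻¹ • w with hx
        have hxsum : (∑ i, x i ^ 2) ≤ 1 := by
          have : (∑ i, x i ^ 2) = d⁻¹ ^ 2 * ∑ i, w i ^ 2 := by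
            rw [Finset.mul_sum]
            refine Finset.sum_congr rfl fun i _ => ?_
            simp [hx, mul_pow]
          rw [this, hwsum, inv_pow, inv_mul_cancel₀ (pow_ne_zero _ (ne_of_gt hd'))]
        have hdot : x ⬝ᵥ A.mulVec y' = d := by
          rw [hx, ← hw, smul_dotProduct]
          have : w ⬝ᵥ w = d ^ 2 := by
            rw [← hwsum, dotProduct]
            exact Finset.sum_congr rfl fun i _ => (sq (w i)).symm
          rw [smul_eq_mul, this, sq, ← mul_assoc, inv_mul_cancel₀ (ne_of_gt hd'), one_mul]
        have := h x y' hxsum hy'sum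
        rw [hdot] at this
        calc d ≤ |d| := le_abs_self d
          _ ≤ B := this
    have hnormw : ‖E (A.mulVec y)‖ = c * d := by
      rw [hyc, Matrix.mulVec_smul, ← hw]
      have : E (c • w) = c • E w := rfl
      rw [this, norm_smul, norm_E, ← hd, Real.norm_eq_abs, abs_of_pos hc]
    rw [hnormw]
    calc c * d ≤ c * B := mul_le_mul_of_nonneg_left hdB (le_of_lt hc)
      _ = B * c := mul_comm _ _

/-- Truncation toward zero. -/
noncomputable def trunc (t : ℝ) : ℤ := if 0 ≤ t then ⌊t⌋ else ⌈t⌉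

lemma abs_trunc_le (t : ℝ) : |(trunc t : ℝ)| ≤ |t| := by
  unfold trunc
  split_ifs with h
  · rw [abs_of_nonneg h, abs_of_nonneg]
    · exact Int.floor_le t
    · exact_mod_cast Int.floor_nonneg.mpr h
  · push_neg at h
    rw [abs_of_neg h, abs_of_nonpos]
    · exact neg_le_neg (Int.le_ceil t)
    · exact_mod_cast Int.ceil_le.mpr (by exact_mod_cast le_of_lt h)

lemma abs_sub_trunc_le (t : ℝ) : |t - (trunc t : ℝ)| ≤ 1 := by
  unfold trunc
  split_ifs with h
  · rw [abs_of_nonneg (by linarith [Int.floor_le t])]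
    linarith [Int.sub_one_lt_floor t]
  · rw [abs_of_nonpos (by linarith [Int.le_ceil t])]
    linarith [Int.ceil_lt_add_one t]

end Stmt7Aux

open Stmt7Aux in
/-- Grid-net bound for the spectral norm: if `N` is the ε-net of grid points in the unit
ball and `|xᵀAy| ≤ C` for all `x, y ∈ N`, then `‖A‖₂ ≤ (1-ε)⁻² C`. -/
theorem stmt7 (n : ℕ) (hn : 0 < n) (ε : ℝ) (hε0 : 0 < ε) (hε1 : ε < 1)
    (A : Matrix (Fin n) (Fin n) ℝ)
    (N : Set (Fin n → ℝ))
    (hN : N = {x | (∑ i, x i ^ 2) ≤ 1 ∧ ∀ i, ∃ z : ℤ, Real.sqrt n * x i / ε = (z : ℝ)})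
    (C : ℝ)
    (hC : ∀ x ∈ N, ∀ y ∈ N, |x ⬝ᵥ A.mulVec y| ≤ C) :
    ‖Matrix.toEuclideanCLM (𝕜 := ℝ) A‖ ≤ (1 - ε)⁻¹ ^ 2 * C := by
  set K := ‖Matrix.toEuclideanCLM (𝕜 := ℝ) A‖ with hK
  have hK0 : 0 ≤ K := norm_nonneg _
  have hsn : (0:ℝ) < Real.sqrt n := Real.sqrt_pos.mpr (by exact_mod_cast hn)
  -- 0 ∈ N
  have h0N : (0 : Fin n → ℝ) ∈ N := by
    rw [hN]
    constructor
    · simp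
    · intro i; exact ⟨0, by simp⟩
  have hC0 : 0 ≤ C := by simpa using hC 0 h0N 0 h0N
  -- net approximation
  have approx : ∀ x : Fin n → ℝ, (∑ i, x i ^ 2) ≤ 1 →
      ∃ u ∈ N, (∑ i, (x i - u i) ^ 2) ≤ ε ^ 2 := by
    intro x hx
    set u : Fin n → ℝ := fun i => ε * (trunc (Real.sqrt n * x i / ε) : ℝ) / Real.sqrt n with hu
    have key : ∀ i, Real.sqrt n * u i / ε = (trunc (Real.sqrt n * x i / ε) : ℝ) := by
      intro i
      rw [hu]; field_simp
    refine ⟨u, ?_, ?_⟩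
    · rw [hN]
      constructor
      · refine le_trans (Finset.sum_le_sum fun i _ => ?_) hx
        rw [← sq_abs (u i), ← sq_abs (x i)]
        apply pow_le_pow_left₀ (abs_nonneg _)
        have h1 : |u i| = ε / Real.sqrt n * |(trunc (Real.sqrt n * x i / ε) : ℝ)| := by
          rw [hu]
          rw [abs_div, abs_mul, abs_of_pos hε0, abs_of_pos hsn]
          ring
        have h2 : |(trunc (Real.sqrt n * x i / ε) : ℝ)| ≤ |Real.sqrt n * x i / ε| :=
          abs_trunc_le _
        have h3 : |Real.sqrt n * x i / ε| = Real.sqrt n / ε * |x i| := by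
          rw [abs_div, abs_mul, abs_of_pos hε0, abs_of_pos hsn]; ring
        rw [h1]
        calc ε / Real.sqrt n * |(trunc (Real.sqrt n * x i / ε) : ℝ)|
            ≤ ε / Real.sqrt n * (Real.sqrt n / ε * |x i|) := by
              apply mul_le_mul_of_nonneg_left _ (le_of_lt (div_pos hε0 hsn))
              rw [← h3]; exact h2
          _ = |x i| := by field_simp
      · intro i
        exact ⟨trunc (Real.sqrt n * x i / ε), key i⟩
    · have hbound : ∀ i, (x i - u i) ^ 2 ≤ ε ^ 2 / n := by
        intro i
        have h1 : x i - u i = ε / Real.sqrt n * (Real.sqrt n * x i / ε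
            - (trunc (Real.sqrt n * x i / ε) : ℝ)) := by
          rw [hu]; field_simp
        have h2 : |x i - u i| ≤ ε / Real.sqrt n := by
          rw [h1, abs_mul, abs_of_pos (div_pos hε0 hsn)]
          calc ε / Real.sqrt n * |Real.sqrt n * x i / ε - (trunc (Real.sqrt n * x i / ε) : ℝ)|
              ≤ ε / Real.sqrt n * 1 :=
                mul_le_mul_of_nonneg_left (abs_sub_trunc_le _) (le_of_lt (div_pos hε0 hsn))
            _ = ε / Real.sqrt n := mul_one _
        have h3 : (x i - u i) ^ 2 ≤ (ε / Real.sqrt n) ^ 2 := by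
          rw [← sq_abs (x i - u i)]
          exact pow_le_pow_left₀ (abs_nonneg _) h2 2
        calc (x i - u i) ^ 2 ≤ (ε / Real.sqrt n) ^ 2 := h3
          _ = ε ^ 2 / n := by
              rw [div_pow, Real.sq_sqrt (Nat.cast_nonneg n)]
      calc (∑ i, (x i - u i) ^ 2) ≤ ∑ _i : Fin n, ε ^ 2 / n :=
            Finset.sum_le_sum fun i _ => hbound i
        _ = n * (ε ^ 2 / n) := by rw [Finset.sum_const, Finset.card_fin, nsmul_eq_mul]
        _ = ε ^ 2 := by field_simp
  -- the intermediate supremum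
  set T : Set ℝ := {r | ∃ u ∈ N, ∃ y : Fin n → ℝ, (∑ i, y i ^ 2) ≤ 1 ∧
      r = |u ⬝ᵥ A.mulVec y|} with hT
  have hTne : T.Nonempty := ⟨|(0 : Fin n → ℝ) ⬝ᵥ A.mulVec 0|, 0, h0N, 0, by simp, rfl⟩
  have hNball : ∀ u ∈ N, (∑ i, u i ^ 2) ≤ 1 := by
    intro u hu; rw [hN] at hu; exact hu.1
  have hTbdd : BddAbove T := by
    refine ⟨K, fun r hr => ?_⟩
    obtain ⟨u, hu, y, hy, rfl⟩ := hr
    calc |u ⬝ᵥ A.mulVec y| ≤ K * Real.sqrt (∑ i, u i ^ 2) * Real.sqrt (∑ i, y i ^ 2) :=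
          abs_dot_le A u y
      _ ≤ K * 1 * 1 := by
          apply mul_le_mul
          · exact mul_le_mul_of_nonneg_left
              (Real.sqrt_le_one.mpr (hNball u hu)) hK0
          · exact Real.sqrt_le_one.mpr hy
          · exact Real.sqrt_nonneg _
          · exact mul_nonneg hK0 zero_le_one
      _ = K := by ring
  set M := sSup T with hM
  have hM0 : 0 ≤ M := le_csSup hTbdd ⟨0, h0N, 0, by simp, by simp⟩
  -- Step 1: M ≤ C + ε * M
  have step1 : M ≤ C + ε * M := by
    apply csSup_le hTne
    rintro r ⟨u, hu, y, hy, rfl⟩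
    obtain ⟨v, hv, hyv⟩ := approx y hy
    have hsplit : u ⬝ᵥ A.mulVec y = u ⬝ᵥ A.mulVec v + u ⬝ᵥ A.mulVec (y - v) := by
      have hvy : v + (y - v) = y := by abel
      rw [← dotProduct_add, ← Matrix.mulVec_add, hvy]
    have h2 : |u ⬝ᵥ A.mulVec (y - v)| ≤ ε * M := by
      set w : Fin n → ℝ := ε⁻¹ • (y - v) with hw
      have hwsum : (∑ i, w i ^ 2) ≤ 1 := by
        have heq : (∑ i, w i ^ 2) = ε⁻¹ ^ 2 * ∑ i, (y i - v i) ^ 2 := by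
          rw [Finset.mul_sum]
          refine Finset.sum_congr rfl fun i _ => ?_
          simp [hw, mul_pow]
        rw [heq]
        calc ε⁻¹ ^ 2 * ∑ i, (y i - v i) ^ 2 ≤ ε⁻¹ ^ 2 * ε ^ 2 :=
              mul_le_mul_of_nonneg_left hyv (sq_nonneg _)
          _ = 1 := by field_simp
      have hmem : |u ⬝ᵥ A.mulVec w| ∈ T := ⟨u, hu, w, hwsum, rfl⟩
      have hle : |u ⬝ᵥ A.mulVec w| ≤ M := le_csSup hTbdd hmem
      have heq2 : u ⬝ᵥ A.mulVec (y - v) = ε * (u ⬝ᵥ A.mulVec w) := by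
        rw [hw, Matrix.mulVec_smul, dotProduct_smul, smul_eq_mul, ← mul_assoc,
          mul_inv_cancel₀ (ne_of_gt hε0), one_mul]
      rw [heq2, abs_mul, abs_of_pos hε0]
      exact mul_le_mul_of_nonneg_left hle (le_of_lt hε0)
    calc |u ⬝ᵥ A.mulVec y| ≤ |u ⬝ᵥ A.mulVec v| + |u ⬝ᵥ A.mulVec (y - v)| := by
          rw [hsplit]; exact abs_add_le _ _
      _ ≤ C + ε * M := add_le_add (hC u hu v hv) h2
  -- Step 2: K ≤ M + ε * K
  have step2 : K ≤ M + ε * K := by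
    apply opNorm_le_of_dot
    · positivity
    · intro x y hx hy
      obtain ⟨u, hu, hxu⟩ := approx x hx
      have hsplit : x ⬝ᵥ A.mulVec y = u ⬝ᵥ A.mulVec y + (x - u) ⬝ᵥ A.mulVec y := by
        have hux : u + (x - u) = x := by abel
        rw [← add_dotProduct, hux]
      have h1 : |u ⬝ᵥ A.mulVec y| ≤ M := le_csSup hTbdd ⟨u, hu, y, hy, rfl⟩
      have h2 : |(x - u) ⬝ᵥ A.mulVec y| ≤ ε * K := by
        calc |(x - u) ⬝ᵥ A.mulVec y|
            ≤ K * Real.sqrt (∑ i, (x - u) i ^ 2) * Real.sqrt (∑ i, y i ^ 2) :=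
              abs_dot_le A _ _
          _ ≤ K * ε * 1 := by
              apply mul_le_mul
              · apply mul_le_mul_of_nonneg_left _ hK0
                calc Real.sqrt (∑ i, (x - u) i ^ 2) ≤ Real.sqrt (ε ^ 2) := by
                      apply Real.sqrt_le_sqrt
                      simpa using hxu
                  _ = ε := Real.sqrt_sq (le_of_lt hε0)
              · exact Real.sqrt_le_one.mpr hy
              · exact Real.sqrt_nonneg _
              · exact mul_nonneg hK0 (le_of_lt hε0)
          _ = ε * K := by ring
      calc |x ⬝ᵥ A.mulVec y| ≤ |u ⬝ᵥ A.mulVec y| + |(x - u) ⬝ᵥ A.mulVec y| := by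
            rw [hsplit]; exact abs_add_le _ _
        _ ≤ M + ε * K := add_le_add h1 h2
  -- conclude
  have h1e : 0 < 1 - ε := by linarith
  have hMC : M ≤ (1 - ε)⁻¹ * C := by
    rw [le_inv_mul_iff₀ h1e]
    linarith
  have hKM : K ≤ (1 - ε)⁻¹ * M := by
    rw [le_inv_mul_iff₀ h1e]
    linarith
  calc K ≤ (1 - ε)⁻¹ * M := hKM
    _ ≤ (1 - ε)⁻¹ * ((1 - ε)⁻¹ * C) :=
        mul_le_mul_of_nonneg_left hMC (by positivity)
    _ = (1 - ε)⁻¹ ^ 2 * C := by ring
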